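/- Let K satisfy 0 ≤ K(x,y) = K(y,x) ≤ κ(1+x)(1+y) for all (x,y) ∈ (0,∞)² and some κ > 0, let f^in ∈ L¹₁(0,∞) with f^in ≥ 0 a.e., let n ≥ 1, K_n := min{K, n}, and let f_n ∈ C¹([0,∞); L¹(0,∞)) be the unique non-negative global solution of Smoluchowski's coagulation equation with kernel K_n and initial condition f^in, which satisfies ‖f_n(t)‖_{1,1} ≤ ‖f^in‖_{1,1} for all t ≥ 0. Then ‖f_n(t) − f_n(s)‖_{L¹} ≤ (3κ/2)·‖f^in‖²_{1,1}·(t − s) for all 0 ≤ s ≤ t and all n ≥ 1. -/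

import Mathlib

open MeasureTheory Filter Topology

noncomputable section

/-- Lebesgue measure on the size space `(0,∞)`. -/
def μplus : Measure ℝ := volume.restrict (Set.Ioi (0:ℝ))

/-- The right-hand side of Smoluchowski's coagulation equation with kernel `K`. -/
def coagRHS (K : ℝ → ℝ → ℝ) (f : ℝ → ℝ) (x : ℝ) : ℝ :=
  (1/2) * (∫ y in Set.Ioo (0:ℝ) x, K y (x - y) * f y * f (x - y)) -
    f x * ∫ y in Set.Ioi (0:ℝ), K x y * f y

/-- A solution `f ∈ C¹([0,∞); L¹(0,∞))` of Smoluchowski's coagulation equation with kernel `K`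
and initial condition `f^in`, viewed as a differential equation in the Banach space `L¹(0,∞)`. -/
def IsC1L1Solution (K : ℝ → ℝ → ℝ) (fin : ℝ → ℝ)
    (F F' : ℝ → Lp ℝ 1 μplus) : Prop :=
  (∀ t ∈ Set.Ici (0:ℝ), HasDerivWithinAt F (F' t) (Set.Ici 0) t) ∧
  ContinuousOn F' (Set.Ici 0) ∧
  (∀ t ∈ Set.Ici (0:ℝ), (F' t : ℝ → ℝ) =ᵐ[μplus] coagRHS K (F t)) ∧
  (F 0 : ℝ → ℝ) =ᵐ[μplus] fin

open ENNReal

/-- Translation invariance for set lintegrals over `Ioi`. -/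
lemma lint_shift (G : ℝ → ℝ≥0∞) (y : ℝ) :
    ∫⁻ x in Set.Ioi y, G (x - y) = ∫⁻ z in Set.Ioi (0:ℝ), G z := by
  have h : ∀ x : ℝ, Set.indicator (Set.Ioi y) (fun x => G (x - y)) (x + y)
      = Set.indicator (Set.Ioi (0:ℝ)) G x := by
    intro x
    by_cases hx : 0 < x
    · rw [Set.indicator_of_mem (by simp [Set.mem_Ioi]; linarith) ,
        Set.indicator_of_mem (Set.mem_Ioi.2 hx)]
      simp
    · rw [Set.indicator_of_notMem (by simp [Set.mem_Ioi]; linarith),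
        Set.indicator_of_notMem (by simpa using hx)]
  rw [← lintegral_indicator measurableSet_Ioi, ← lintegral_indicator measurableSet_Ioi,
    ← lintegral_add_right_eq_self (Set.indicator (Set.Ioi y) fun x => G (x - y)) y]
  exact lintegral_congr h

/-- Tonelli for the coagulation convolution term. -/
lemma conv_lintegral (G : ℝ → ℝ≥0∞) (hG : Measurable G) :
    ∫⁻ x in Set.Ioi (0:ℝ), ∫⁻ y in Set.Ioo (0:ℝ) x, G y * G (x - y) =
      (∫⁻ y in Set.Ioi (0:ℝ), G y) * (∫⁻ y in Set.Ioi (0:ℝ), G y) := by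
  set J := ∫⁻ y in Set.Ioi (0:ℝ), G y with hJ
  set Φ : ℝ → ℝ → ℝ≥0∞ := fun x y =>
    Set.indicator (Set.Ioo (0:ℝ) x) (fun y => G y * G (x - y)) y with hΦdef
  have hΦmeas : Measurable (Function.uncurry Φ) := by
    have : Function.uncurry Φ = Set.indicator {p : ℝ × ℝ | 0 < p.2 ∧ p.2 < p.1}
        (fun p => G p.2 * G (p.1 - p.2)) := by
      funext p
      simp only [Function.uncurry, hΦdef, Set.indicator, Set.mem_Ioo, Set.mem_setOf_eq]
    rw [this]
    exact Measurable.indicator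
      ((hG.comp measurable_snd).mul (hG.comp (measurable_fst.sub measurable_snd)))
      ((measurableSet_lt measurable_const measurable_snd).inter
        (measurableSet_lt measurable_snd measurable_fst))
  have inner_eq : ∀ x : ℝ, ∫⁻ y, Φ x y = ∫⁻ y in Set.Ioo (0:ℝ) x, G y * G (x - y) := by
    intro x; exact lintegral_indicator measurableSet_Ioo _
  have step1 : ∫⁻ x in Set.Ioi (0:ℝ), ∫⁻ y in Set.Ioo (0:ℝ) x, G y * G (x - y)
      = ∫⁻ x, ∫⁻ y, Φ x y := by
    rw [← lintegral_indicator measurableSet_Ioi]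
    refine lintegral_congr fun x => ?_
    rw [inner_eq]
    by_cases hx : 0 < x
    · rw [Set.indicator_of_mem (Set.mem_Ioi.2 hx)]
    · rw [Set.indicator_of_notMem (by simpa using hx),
        Set.Ioo_eq_empty (by simpa using hx)]
      simp
  have step2 : ∫⁻ x, ∫⁻ y, Φ x y = ∫⁻ y, ∫⁻ x, Φ x y :=
    lintegral_lintegral_swap hΦmeas.aemeasurable
  have step3 : ∀ y : ℝ, ∫⁻ x, Φ x y = Set.indicator (Set.Ioi (0:ℝ)) (fun y => G y * J) y := by
    intro y
    by_cases hy : 0 < y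
    · have hfun : ∀ x : ℝ, Φ x y =
          Set.indicator (Set.Ioi y) (fun x => G y * G (x - y)) x := by
        intro x
        simp only [hΦdef, Set.indicator, Set.mem_Ioo, Set.mem_Ioi]
        by_cases hxy : y < x
        · simp [hxy, hy]
        · simp [hxy]
      rw [Set.indicator_of_mem (Set.mem_Ioi.2 hy)]
      calc ∫⁻ x, Φ x y = ∫⁻ x in Set.Ioi y, G y * G (x - y) := by
            rw [← lintegral_indicator measurableSet_Ioi]
            exact lintegral_congr hfun
        _ = G y * ∫⁻ x in Set.Ioi y, G (x - y) :=
            lintegral_const_mul _ (hG.comp (measurable_id.sub measurable_const))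
        _ = G y * J := by rw [lint_shift]
    · rw [Set.indicator_of_notMem (by simpa using hy)]
      have : ∀ x : ℝ, Φ x y = 0 := by
        intro x
        apply Set.indicator_of_notMem
        simp only [Set.mem_Ioo, not_and]
        intro h; exact absurd h hy
      simp [this]
  rw [step1, step2]
  calc ∫⁻ y, ∫⁻ x, Φ x y = ∫⁻ y, Set.indicator (Set.Ioi (0:ℝ)) (fun y => G y * J) y :=
        lintegral_congr step3
    _ = ∫⁻ y in Set.Ioi (0:ℝ), G y * J := lintegral_indicator measurableSet_Ioi _
    _ = J * J := lintegral_mul_const _ hG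

/-- Core `L¹` bound on the coagulation RHS. -/
lemma coag_bound (Kn : ℝ → ℝ → ℝ) (hKnmeas : Measurable (Function.uncurry Kn))
    (κ M : ℝ) (hκ : 0 ≤ κ) (hM : 0 ≤ M)
    (hKn : ∀ x ∈ Set.Ioi (0:ℝ), ∀ y ∈ Set.Ioi (0:ℝ),
      0 ≤ Kn x y ∧ Kn x y ≤ κ * (1 + x) * (1 + y))
    (f : ℝ → ℝ) (hf : StronglyMeasurable f)
    (hfint : Integrable (fun x => (1 + x) * |f x|) μplus)
    (hfM : ∫ x, (1 + x) * |f x| ∂μplus ≤ M) :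
    ∫⁻ x, ‖coagRHS Kn f x‖₊ ∂μplus ≤ ENNReal.ofReal (3 * κ / 2 * M ^ 2) := by
  set G : ℝ → ℝ≥0∞ := fun y => ENNReal.ofReal ((1 + y) * |f y|) with hGdef
  have hGmeas : Measurable G :=
    ((measurable_const.add measurable_id).mul hf.measurable.abs).ennreal_ofReal
  set J : ℝ≥0∞ := ∫⁻ y in Set.Ioi (0:ℝ), G y with hJdef
  have hJle : J ≤ ENNReal.ofReal M := by
    have hnn : 0 ≤ᵐ[μplus] fun x => (1 + x) * |f x| := by
      have hmem : ∀ᵐ x ∂μplus, x ∈ Set.Ioi (0:ℝ) := ae_restrict_mem measurableSet_Ioi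
      filter_upwards [hmem] with x hx
      have : (0:ℝ) < x := hx
      positivity
    have h1 : ENNReal.ofReal (∫ x, (1 + x) * |f x| ∂μplus) = ∫⁻ x, G x ∂μplus :=
      ofReal_integral_eq_lintegral_ofReal hfint hnn
    have h2 : ∫⁻ x, G x ∂μplus = J := rfl
    rw [← h2, ← h1]
    exact ENNReal.ofReal_le_ofReal hfM
  -- pointwise bound on (0,∞)
  have key : ∀ x ∈ Set.Ioi (0:ℝ), (‖coagRHS Kn f x‖₊ : ℝ≥0∞) ≤
      ENNReal.ofReal (1/2) * ENNReal.ofReal κ *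
        (∫⁻ y in Set.Ioo (0:ℝ) x, G y * G (x - y)) +
      ENNReal.ofReal κ * J * G x := by
    intro x hx
    have hx0 : (0:ℝ) < x := hx
    set S : ℝ := ∫ y in Set.Ioo (0:ℝ) x, Kn y (x - y) * f y * f (x - y) with hSdef
    set T : ℝ := ∫ y in Set.Ioi (0:ℝ), Kn x y * f y with hTdef
    have hsplit : (‖coagRHS Kn f x‖₊ : ℝ≥0∞) ≤
        (‖(1/2 : ℝ) * S‖₊ : ℝ≥0∞) + (‖f x * T‖₊ : ℝ≥0∞) := by
      rw [← ENNReal.coe_add]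
      exact_mod_cast nnnorm_sub_le _ _
    have hA : (‖(1/2 : ℝ) * S‖₊ : ℝ≥0∞) ≤
        ENNReal.ofReal (1/2) * ENNReal.ofReal κ *
          (∫⁻ y in Set.Ioo (0:ℝ) x, G y * G (x - y)) := by
      have h1 : (‖(1/2 : ℝ) * S‖₊ : ℝ≥0∞) = ENNReal.ofReal (1/2) * (‖S‖₊ : ℝ≥0∞) := by
        rw [← enorm_eq_nnnorm, ← enorm_eq_nnnorm, Real.enorm_eq_ofReal_abs, Real.enorm_eq_ofReal_abs, abs_mul,
          ENNReal.ofReal_mul (by positivity), abs_of_nonneg (by norm_num : (0:ℝ) ≤ 1/2)]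
      have h2 : (‖S‖₊ : ℝ≥0∞) ≤
          ∫⁻ y in Set.Ioo (0:ℝ) x, ‖Kn y (x - y) * f y * f (x - y)‖₊ :=
        enorm_integral_le_lintegral_enorm _
      have h3 : ∫⁻ y in Set.Ioo (0:ℝ) x, (‖Kn y (x - y) * f y * f (x - y)‖₊ : ℝ≥0∞) ≤
          ∫⁻ y in Set.Ioo (0:ℝ) x, ENNReal.ofReal κ * (G y * G (x - y)) := by
        refine setLIntegral_mono' measurableSet_Ioo fun y hy => ?_
        obtain ⟨hy0, hyx⟩ := hy
        have hxy0 : (0:ℝ) < x - y := by linarith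
        obtain ⟨hk0, hkle⟩ := hKn y hy0 (x - y) hxy0
        rw [← enorm_eq_nnnorm, Real.enorm_eq_ofReal_abs, abs_mul, abs_mul, abs_of_nonneg hk0]
        have hb : Kn y (x - y) * |f y| * |f (x - y)| ≤
            κ * ((1 + y) * |f y|) * ((1 + (x - y)) * |f (x - y)|) := by
          have h1y : (0:ℝ) ≤ 1 + y := by linarith
          have h1xy : (0:ℝ) ≤ 1 + (x - y) := by linarith
          have := mul_le_mul_of_nonneg_right
            (mul_le_mul_of_nonneg_right hkle (abs_nonneg (f y))) (abs_nonneg (f (x - y)))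
          nlinarith [abs_nonneg (f y), abs_nonneg (f (x - y))]
        calc ENNReal.ofReal (Kn y (x - y) * |f y| * |f (x - y)|)
            ≤ ENNReal.ofReal (κ * ((1 + y) * |f y|) * ((1 + (x - y)) * |f (x - y)|)) :=
              ENNReal.ofReal_le_ofReal hb
          _ = ENNReal.ofReal κ * (G y * G (x - y)) := by
              rw [ENNReal.ofReal_mul (by positivity), ENNReal.ofReal_mul hκ, mul_assoc]
      have h4 : ∫⁻ y in Set.Ioo (0:ℝ) x, ENNReal.ofReal κ * (G y * G (x - y)) =
          ENNReal.ofReal κ * ∫⁻ y in Set.Ioo (0:ℝ) x, G y * G (x - y) :=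
        lintegral_const_mul' _ _ ENNReal.ofReal_ne_top
      calc (‖(1/2 : ℝ) * S‖₊ : ℝ≥0∞) = ENNReal.ofReal (1/2) * (‖S‖₊ : ℝ≥0∞) := h1
        _ ≤ ENNReal.ofReal (1/2) *
            (ENNReal.ofReal κ * ∫⁻ y in Set.Ioo (0:ℝ) x, G y * G (x - y)) := by
            rw [← h4]; exact mul_le_mul_right (h2.trans h3) _
        _ = ENNReal.ofReal (1/2) * ENNReal.ofReal κ *
            (∫⁻ y in Set.Ioo (0:ℝ) x, G y * G (x - y)) := by rw [mul_assoc]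
    have hB : (‖f x * T‖₊ : ℝ≥0∞) ≤ ENNReal.ofReal κ * J * G x := by
      have h1 : (‖f x * T‖₊ : ℝ≥0∞) = (‖f x‖₊ : ℝ≥0∞) * (‖T‖₊ : ℝ≥0∞) := by
        rw [nnnorm_mul]; push_cast; ring
      have h2 : (‖T‖₊ : ℝ≥0∞) ≤ ∫⁻ y in Set.Ioi (0:ℝ), (‖Kn x y * f y‖₊ : ℝ≥0∞) :=
        enorm_integral_le_lintegral_enorm _
      have h3 : ∫⁻ y in Set.Ioi (0:ℝ), (‖Kn x y * f y‖₊ : ℝ≥0∞) ≤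
          ∫⁻ y in Set.Ioi (0:ℝ), ENNReal.ofReal (κ * (1 + x)) * G y := by
        refine setLIntegral_mono' measurableSet_Ioi fun y hy0 => ?_
        have hy0' : (0:ℝ) < y := hy0
        obtain ⟨hk0, hkle⟩ := hKn x hx y hy0
        rw [← enorm_eq_nnnorm, Real.enorm_eq_ofReal_abs, abs_mul, abs_of_nonneg hk0, ← ENNReal.ofReal_mul
          (by positivity)]
        refine ENNReal.ofReal_le_ofReal ?_
        have h1y : (0:ℝ) ≤ 1 + y := by linarith
        have := mul_le_mul_of_nonneg_right hkle (abs_nonneg (f y))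
        nlinarith [abs_nonneg (f y)]
      have h4 : ∫⁻ y in Set.Ioi (0:ℝ), ENNReal.ofReal (κ * (1 + x)) * G y =
          ENNReal.ofReal (κ * (1 + x)) * J :=
        lintegral_const_mul' _ _ ENNReal.ofReal_ne_top
      have h5 : (‖f x‖₊ : ℝ≥0∞) * ENNReal.ofReal (κ * (1 + x)) =
          ENNReal.ofReal κ * G x := by
        rw [← enorm_eq_nnnorm, Real.enorm_eq_ofReal_abs, ← ENNReal.ofReal_mul (abs_nonneg _), hGdef,
          ← ENNReal.ofReal_mul hκ]
        congr 1
        ring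
      calc (‖f x * T‖₊ : ℝ≥0∞) = (‖f x‖₊ : ℝ≥0∞) * (‖T‖₊ : ℝ≥0∞) := h1
        _ ≤ (‖f x‖₊ : ℝ≥0∞) * (ENNReal.ofReal (κ * (1 + x)) * J) := by
            rw [← h4]; exact mul_le_mul_right (h2.trans h3) _
        _ = (‖f x‖₊ : ℝ≥0∞) * ENNReal.ofReal (κ * (1 + x)) * J := by rw [mul_assoc]
        _ = ENNReal.ofReal κ * G x * J := by rw [h5]
        _ = ENNReal.ofReal κ * J * G x := by ring
    calc (‖coagRHS Kn f x‖₊ : ℝ≥0∞) ≤ (‖(1/2 : ℝ) * S‖₊ : ℝ≥0∞) + (‖f x * T‖₊ : ℝ≥0∞) :=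
        hsplit
      _ ≤ _ := add_le_add hA hB
  -- integrate the pointwise bound
  have hmain : ∫⁻ x, ‖coagRHS Kn f x‖₊ ∂μplus ≤
      ENNReal.ofReal (1/2) * ENNReal.ofReal κ * (J * J) + ENNReal.ofReal κ * J * J := by
    have step : ∫⁻ x, ‖coagRHS Kn f x‖₊ ∂μplus ≤
        ∫⁻ x in Set.Ioi (0:ℝ),
          (ENNReal.ofReal (1/2) * ENNReal.ofReal κ *
            (∫⁻ y in Set.Ioo (0:ℝ) x, G y * G (x - y)) +
          ENNReal.ofReal κ * J * G x) := by
      exact setLIntegral_mono' measurableSet_Ioi key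
    refine step.trans ?_
    have hGm2 : Measurable fun x : ℝ => ENNReal.ofReal κ * J * G x := by
      fun_prop
    have hJne : J ≠ ⊤ := (hJle.trans_lt ENNReal.ofReal_lt_top).ne
    rw [lintegral_add_right _ hGm2,
      lintegral_const_mul' _ _ (ENNReal.mul_ne_top ENNReal.ofReal_ne_top ENNReal.ofReal_ne_top),
      conv_lintegral G hGmeas,
      lintegral_const_mul' _ _ (ENNReal.mul_ne_top ENNReal.ofReal_ne_top hJne)]
  refine hmain.trans ?_
  have hJM : J ≤ ENNReal.ofReal M := hJle
  calc ENNReal.ofReal (1/2) * ENNReal.ofReal κ * (J * J) + ENNReal.ofReal κ * J * J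
      ≤ ENNReal.ofReal (1/2) * ENNReal.ofReal κ * (ENNReal.ofReal M * ENNReal.ofReal M) +
        ENNReal.ofReal κ * ENNReal.ofReal M * ENNReal.ofReal M := by
        gcongr
    _ = ENNReal.ofReal (3 * κ / 2 * M ^ 2) := by
        rw [← ENNReal.ofReal_mul (by norm_num : (0:ℝ) ≤ 1/2),
          ← ENNReal.ofReal_mul hM, ← ENNReal.ofReal_mul (by positivity),
          ← ENNReal.ofReal_mul hκ, ← ENNReal.ofReal_mul (by positivity),
          ← ENNReal.ofReal_add (by positivity) (by positivity)]
        congr 1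
        ring

/-- Let `0 ≤ K(x,y) = K(y,x) ≤ κ(1+x)(1+y)`, `f^in ∈ L¹₁(0,∞)` non-negative,
`n ≥ 1`, `K_n = min{K, n}`, and let `f_n` be the unique non-negative global `C¹([0,∞); L¹)`
solution with kernel `K_n` and initial condition `f^in`, which satisfies
`‖f_n(t)‖_{1,1} ≤ ‖f^in‖_{1,1}`. Then `‖f_n(t) − f_n(s)‖_{L¹} ≤ (3κ/2)‖f^in‖²_{1,1}(t − s)`
for all `0 ≤ s ≤ t`. -/
theorem time_equicontinuity_truncated_solutions
    (K : ℝ → ℝ → ℝ) (hKmeas : Measurable (Function.uncurry K))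
    (κ : ℝ) (hκ : 0 < κ)
    (hKsymm : ∀ x ∈ Set.Ioi (0:ℝ), ∀ y ∈ Set.Ioi (0:ℝ), K x y = K y x)
    (hKbd : ∀ x ∈ Set.Ioi (0:ℝ), ∀ y ∈ Set.Ioi (0:ℝ),
      0 ≤ K x y ∧ K x y ≤ κ * (1 + x) * (1 + y))
    (fin : ℝ → ℝ) (hfin : Integrable fin μplus)
    (hfin1 : Integrable (fun x => (1 + x) * |fin x|) μplus)
    (hfin0 : ∀ᵐ x ∂μplus, 0 ≤ fin x)
    (n : ℕ) (hn : 1 ≤ n)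
    (F F' : ℝ → Lp ℝ 1 μplus)
    (hsol : IsC1L1Solution (fun x y => min (K x y) (n : ℝ)) fin F F')
    (hpos : ∀ t ∈ Set.Ici (0:ℝ), ∀ᵐ x ∂μplus, 0 ≤ (F t : ℝ → ℝ) x)
    (hmom : ∀ t ∈ Set.Ici (0:ℝ),
      Integrable (fun x => (1 + x) * |(F t : ℝ → ℝ) x|) μplus ∧
      ∫ x, (1 + x) * |(F t : ℝ → ℝ) x| ∂μplus ≤ ∫ x, (1 + x) * |fin x| ∂μplus)
    (s t : ℝ) (hs : 0 ≤ s) (hst : s ≤ t) :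
    ∫ x, |(F t : ℝ → ℝ) x - (F s : ℝ → ℝ) x| ∂μplus ≤
      (3 * κ / 2) * (∫ x, (1 + x) * |fin x| ∂μplus) ^ 2 * (t - s) := by
  obtain ⟨hderiv, hcont, hrhs, hinit⟩ := hsol
  set Kn : ℝ → ℝ → ℝ := fun x y => min (K x y) (n : ℝ) with hKndef
  have hKnmeas : Measurable (Function.uncurry Kn) := hKmeas.min measurable_const
  have hKnbd : ∀ x ∈ Set.Ioi (0:ℝ), ∀ y ∈ Set.Ioi (0:ℝ),
      0 ≤ Kn x y ∧ Kn x y ≤ κ * (1 + x) * (1 + y) := by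
    intro x hx y hy
    obtain ⟨h0, hle⟩ := hKbd x hx y hy
    exact ⟨le_min h0 (by positivity), (min_le_left _ _).trans hle⟩
  set M : ℝ := ∫ x, (1 + x) * |fin x| ∂μplus with hMdef
  have hM0 : 0 ≤ M := by
    refine integral_nonneg_of_ae ?_
    have hmem : ∀ᵐ x ∂μplus, x ∈ Set.Ioi (0:ℝ) := ae_restrict_mem measurableSet_Ioi
    filter_upwards [hmem] with x hx
    have : (0:ℝ) < x := hx
    positivity
  have bound : ∀ τ ∈ Set.Ici (0:ℝ), ‖F' τ‖ ≤ 3 * κ / 2 * M ^ 2 := by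
    intro τ hτ
    have h1 : ∫⁻ x, (‖(F' τ : ℝ → ℝ) x‖₊ : ℝ≥0∞) ∂μplus
        = ∫⁻ x, (‖coagRHS Kn (F τ) x‖₊ : ℝ≥0∞) ∂μplus :=
      lintegral_congr_ae ((hrhs τ hτ).mono fun x hx => by simp only [hx])
    have h2 := coag_bound Kn hKnmeas κ M hκ.le hM0 hKnbd (F τ)
      (Lp.stronglyMeasurable (F τ)) (hmom τ hτ).1 (hmom τ hτ).2
    rw [Lp.norm_def, eLpNorm_one_eq_lintegral_enorm]
    refine ENNReal.toReal_le_of_le_ofReal (by positivity) ?_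
    simp only [enorm_eq_nnnorm]
    rw [h1]
    exact h2
  have hmv : ‖F t - F s‖ ≤ (3 * κ / 2 * M ^ 2) * ‖t - s‖ :=
    Convex.norm_image_sub_le_of_norm_hasDerivWithin_le hderiv bound (convex_Ici 0)
      hs (hs.trans hst)
  have hL1 : ∫ x, |(F t : ℝ → ℝ) x - (F s : ℝ → ℝ) x| ∂μplus = ‖F t - F s‖ := by
    rw [L1.norm_eq_integral_norm]
    refine integral_congr_ae ((Lp.coeFn_sub (F t) (F s)).mono fun x hx => ?_)
    simp only [hx, Pi.sub_apply, Real.norm_eq_abs]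
  rw [hL1]
  calc ‖F t - F s‖ ≤ (3 * κ / 2 * M ^ 2) * ‖t - s‖ := hmv
    _ = 3 * κ / 2 * M ^ 2 * (t - s) := by
        rw [Real.norm_eq_abs, abs_of_nonneg (by linarith)]

end
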